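/- arXiv:2312.04993 — 8 statements merged into one kernel-verified Lean document; each statement's English description precedes it below -/
import Mathlib

section
/- For a countable group G, the set LO(G) of positive cones of G, viewed as a subset of the product space {0,1}^G (i.e., of Set G with the product topology where {0,1} is discrete), is a closed subset; in particular LO(G) is a compact topological space. -/
/-- `P` is a positive cone of `G`: closed under multiplication, and `G \ {1}` is the
disjoint union of `P` and `P⁻¹`. -/
def IsPositiveCone {G : Type*} [Group G] (P : Set G) : Prop :=
  (∀ a ∈ P, ∀ b ∈ P, a * b ∈ P) ∧ (P ∪ P⁻¹ = {(1 : G)}ᶜ) ∧ Disjoint P P⁻¹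

/-- The space `LO(G)` of positive cones of `G`, as a subset of `{0,1}^G = G → Bool`
(with the product topology, `Bool` discrete). -/
def LO (G : Type*) [Group G] : Set (G → Bool) :=
  {f | IsPositiveCone {g : G | f g = true}}

lemma mem_LO_iff {G : Type*} [Group G] (f : G → Bool) :
    f ∈ LO G ↔ f 1 = false ∧ (∀ a b : G, f a = true → f b = true → f (a * b) = true) ∧
      (∀ g : G, g = 1 ∨ f g = true ∨ f g⁻¹ = true) ∧
      (∀ g : G, ¬(f g = true ∧ f g⁻¹ = true)) := by
  constructor
  · rintro ⟨hmul, hunion, hdis⟩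
    refine ⟨?_, ?_, ?_, ?_⟩
    · by_contra h
      have h1 : (1 : G) ∈ ({g : G | f g = true} ∪ {g : G | f g = true}⁻¹) := by
        left; simpa using eq_true_of_ne_false h
      rw [hunion] at h1
      simp at h1
    · intro a b ha hb; exact hmul a ha b hb
    · intro g
      by_cases hg : g = 1
      · left; exact hg
      · right
        have : g ∈ ({g : G | f g = true} ∪ {g : G | f g = true}⁻¹) := by
          rw [hunion]; simpa using hg
        rcases this with h | h
        · left; exact h
        · right; exact h
    · intro g ⟨h1, h2⟩
      exact Set.disjoint_left.mp hdis h1 (by simpa using h2)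
  · rintro ⟨hone, hmul, htot, hdis⟩
    refine ⟨fun a ha b hb => hmul a b ha hb, ?_, ?_⟩
    · ext g
      simp only [Set.mem_union, Set.mem_setOf_eq, Set.mem_inv, Set.mem_compl_iff,
        Set.mem_singleton_iff]
      constructor
      · rintro (h | h) rfl
        · rw [hone] at h; exact Bool.false_ne_true h
        · rw [inv_one, hone] at h; exact Bool.false_ne_true h
      · intro hg
        rcases htot g with h | h | h
        · exact absurd h hg
        · left; exact h
        · right; exact h
    · rw [Set.disjoint_left]
      intro g h1 h2
      exact hdis g ⟨h1, by simpa using h2⟩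

/-- For a countable group `G`, the set of positive cones is a closed subset
of `{0,1}^G`; in particular it is compact. -/
theorem LO_isClosed_isCompact (G : Type*) [Group G] [Countable G] :
    IsClosed (LO G) ∧ IsCompact (LO G) := by
  have hLO : LO G = {f : G → Bool | f 1 = false} ∩
      ((⋂ a : G, ⋂ b : G, {f : G → Bool | f a = true → f b = true → f (a * b) = true}) ∩
      ((⋂ g : G, {f : G → Bool | g = 1 ∨ f g = true ∨ f g⁻¹ = true}) ∩
      (⋂ g : G, {f : G → Bool | ¬(f g = true ∧ f g⁻¹ = true)}))) := by
    ext f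
    simp only [mem_LO_iff, Set.mem_inter_iff, Set.mem_iInter, Set.mem_setOf_eq]
  have key : ∀ (g₁ g₂ g₃ : G) (S : Set (Bool × Bool × Bool)),
      IsClosed {f : G → Bool | (f g₁, f g₂, f g₃) ∈ S} := by
    intro g₁ g₂ g₃ S
    exact (isClosed_discrete S).preimage
      (((continuous_apply g₁).prodMk ((continuous_apply g₂).prodMk (continuous_apply g₃))))
  have hclosed : IsClosed (LO G) := by
    rw [hLO]
    have h1 : IsClosed {f : G → Bool | f 1 = false} := by
      have := key (1 : G) 1 1 {p | p.1 = false}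
      simpa using this
    have h2 := isClosed_iInter fun a : G => isClosed_iInter fun b : G =>
        key a b (a * b) {p | p.1 = true → p.2.1 = true → p.2.2 = true}
    have h3 := isClosed_iInter fun g : G =>
        key g g⁻¹ g⁻¹ {p | g = 1 ∨ p.1 = true ∨ p.2.1 = true}
    have h4 := isClosed_iInter fun g : G =>
        key g g⁻¹ g⁻¹ {p | ¬(p.1 = true ∧ p.2.1 = true)}
    exact h1.inter (h2.inter (h3.inter h4))
  exact ⟨hclosed, hclosed.isCompact⟩
end

section
/- Let G be a group with positive cone P and let C ≤ G be a subgroup that is convex with respect to the order induced by P (i.e., g, h ∈ C and g⁻¹f ∈ P and f⁻¹h ∈ P imply f ∈ C). If c ∈ C and g₁, …, gₙ ∈ G \ C all belong to P, then g₁, …, gₙ all belong to cPc⁻¹. -/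
/-- If `C` is convex with respect to the order induced by the positive cone `P`
(`g <_P h ↔ g⁻¹h ∈ P`), `c ∈ C`, and `g₁, …, gₙ ∈ G \ C` all lie in `P`, then each `gᵢ`
lies in `cPc⁻¹` (equivalently `c⁻¹ gᵢ c ∈ P`). -/
theorem convex_claim {G : Type*} [Group G] (P : Set G) (hP : IsPositiveCone P)
    (C : Subgroup G)
    (hconv : ∀ g h f : G, g ∈ C → h ∈ C → g⁻¹ * f ∈ P → f⁻¹ * h ∈ P → f ∈ C)
    (c : G) (hc : c ∈ C) (n : ℕ) (gs : Fin n → G)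
    (hgsC : ∀ i, gs i ∉ C) (hgsP : ∀ i, gs i ∈ P) :
    ∀ i, c⁻¹ * gs i * c ∈ P := by
  obtain ⟨hmul, hunion, hdisj⟩ := hP
  intro i
  set g := gs i with hg
  have hgC : g ∉ C := hgsC i
  have hgP : g ∈ P := hgsP i
  -- a nonidentity element is in P or P⁻¹
  have htri : ∀ x : G, x ≠ 1 → x ∈ P ∨ x⁻¹ ∈ P := by
    intro x hx
    have : x ∈ P ∪ P⁻¹ := by rw [hunion]; simpa using hx
    rcases this with h | h
    · exact Or.inl h
    · exact Or.inr h
  by_contra hcon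
  -- c⁻¹ g c ≠ 1 since g ≠ 1
  have hgne : g ≠ 1 := by
    intro h
    exact hgC (h ▸ C.one_mem)
  have hne : c⁻¹ * g * c ≠ 1 := by
    intro h
    apply hgne
    have : g = c * (c⁻¹ * g * c) * c⁻¹ := by group
    rw [this, h]; group
  have hinv : c⁻¹ * g⁻¹ * c ∈ P := by
    rcases htri _ hne with h | h
    · exact absurd h hcon
    · have : (c⁻¹ * g * c)⁻¹ = c⁻¹ * g⁻¹ * c := by group
      rwa [this] at h
  rcases eq_or_ne g c with rfl | hgc
  · exact hgC hc
  have hgcne : g⁻¹ * c ≠ 1 := by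
    intro h
    apply hgc
    have := congrArg (fun x => g * x) h
    simpa using this.symm
  rcases htri _ hgcne with h | h
  · -- 1 < g < c : convexity gives g ∈ C
    exact hgC (hconv 1 c g C.one_mem hc (by simpa using hgP) h)
  · -- c⁻¹ g ∈ P
    have hcg : c⁻¹ * g ∈ P := by
      have : (g⁻¹ * c)⁻¹ = c⁻¹ * g := by group
      rwa [this] at h
    have hcinv : c⁻¹ ∈ P := by
      have := hmul _ hinv _ hcg
      have e : (c⁻¹ * g⁻¹ * c) * (c⁻¹ * g) = c⁻¹ := by group
      rwa [e] at this
    have hcginv : c⁻¹ * g⁻¹ ∈ P := by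
      have := hmul _ hinv _ hcinv
      have e : (c⁻¹ * g⁻¹ * c) * c⁻¹ = c⁻¹ * g⁻¹ := by group
      rwa [e] at this
    have hgcinv : g * c⁻¹ ∈ P := by
      have h1 := hmul _ hgP _ hcginv
      have h2 := hmul _ h1 _ hgP
      have e : (g * (c⁻¹ * g⁻¹)) * g = g * c⁻¹ := by group
      rwa [e] at h2
    -- c < g⁻¹ < c⁻¹ : convexity gives g⁻¹ ∈ C
    have : g⁻¹ ∈ C := hconv c c⁻¹ g⁻¹ hc (C.inv_mem hc) hcginv (by simpa using hgcinv)
    exact hgC (by simpa using C.inv_mem this)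
end

section
/- Let G be a group, C ≤ G a subgroup, and suppose there is a linear order <' on the coset space G/C invariant under the left G-action (translation). For any positive cone Q of C, the set P̄ = {g ∈ G : C <' gC, or (g ∈ C and g ∈ Q)} is a positive cone of G, and the resulting map LO(C) → LO(G), Q ↦ P̄, is injective. -/
/-- The lexicographic extension of a positive cone `Q` of `C` along a linear order `lt'`
on the coset space `G ⧸ C`: `g ∈ Q̄ iff C <' gC, or g ∈ C and g ∈ Q`. -/
def lexExt {G : Type*} [Group G] (C : Subgroup G)
    (lt' : G ⧸ C → G ⧸ C → Prop) (Q : Set C) : Set G :=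
  {g | lt' ((1 : G) : G ⧸ C) (g : G ⧸ C) ∨ ∃ hg : g ∈ C, (⟨g, hg⟩ : C) ∈ Q}

lemma coe_eq_one_iff {G : Type*} [Group G] (C : Subgroup G) (g : G) :
    ((1:G) : G ⧸ C) = (g : G ⧸ C) ↔ g ∈ C := by
  rw [QuotientGroup.eq]; simp

lemma one_notMem_cone {G : Type*} [Group G] {P : Set G} (hP : IsPositiveCone P) :
    (1 : G) ∉ P := by
  intro h
  have : (1:G) ∈ P ∪ P⁻¹ := Or.inl h
  rw [hP.2.1] at this
  exact this rfl

/-- If `lt'` is a `G`-invariant strict linear order on `G ⧸ C`, then for every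
positive cone `Q` of `C` the lexicographic extension `Q̄` is a positive cone of `G`, and
the map `Q ↦ Q̄` is injective. -/
theorem lexExt_positive_cone_and_injective {G : Type*} [Group G] (C : Subgroup G)
    (lt' : G ⧸ C → G ⧸ C → Prop)
    (hirr : ∀ x, ¬ lt' x x)
    (htrans : ∀ x y z, lt' x y → lt' y z → lt' x z)
    (htotal : ∀ x y, x ≠ y → lt' x y ∨ lt' y x)
    (hinv : ∀ (g : G) (x y : G ⧸ C), lt' x y → lt' (g • x) (g • y)) :
    (∀ Q : Set C, IsPositiveCone Q → IsPositiveCone (lexExt C lt' Q)) ∧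
    (∀ Q₁ Q₂ : Set C, IsPositiveCone Q₁ → IsPositiveCone Q₂ →
      lexExt C lt' Q₁ = lexExt C lt' Q₂ → Q₁ = Q₂) := by
  -- basic facts about the action
  have hsmul : ∀ g h : G, g • ((h : G) : G ⧸ C) = ((g * h : G) : G ⧸ C) := fun g h => rfl
  have hshift : ∀ g h : G, lt' ((1:G) : G ⧸ C) ((h : G) : G ⧸ C) →
      lt' ((g : G) : G ⧸ C) ((g * h : G) : G ⧸ C) := by
    intro g h hlt
    have := hinv g _ _ hlt
    rwa [hsmul, hsmul, mul_one] at this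
  constructor
  · intro Q hQ
    refine ⟨?_, ?_, ?_⟩
    · -- closure
      rintro a (ha | ⟨haC, haQ⟩) b (hb | ⟨hbC, hbQ⟩)
      · exact Or.inl (htrans _ _ _ ha (hshift a b hb))
      · left
        have : ((a * b : G) : G ⧸ C) = (a : G ⧸ C) := by
          rw [QuotientGroup.eq]
          simpa using hbC
        rwa [this]
      · left
        have h1 : ((a : G) : G ⧸ C) = ((1:G) : G ⧸ C) := ((coe_eq_one_iff C a).mpr haC).symm
        have := hshift a b hb
        rwa [h1] at this
      · exact Or.inr ⟨C.mul_mem haC hbC, hQ.1 _ haQ _ hbQ⟩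
    · -- union
      ext g
      simp only [Set.mem_union, Set.mem_inv, Set.mem_compl_iff, Set.mem_singleton_iff]
      constructor
      · rintro (hg | hg) h1
        · subst h1
          rcases hg with hlt | ⟨_, hQ1⟩
          · exact hirr _ hlt
          · exact one_notMem_cone hQ hQ1
        · subst h1
          rcases hg with hlt | ⟨_, hQ1⟩
          · simp at hlt; exact hirr _ hlt
          · exact one_notMem_cone hQ (by simp at hQ1; exact hQ1)
      · intro hg
        by_cases hgC : g ∈ C
        · have hne : (⟨g, hgC⟩ : C) ≠ 1 := by
            intro h; apply hg; simpa [Subtype.ext_iff] using h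
          have : (⟨g, hgC⟩ : C) ∈ Q ∪ Q⁻¹ := by rw [hQ.2.1]; exact hne
          rcases this with h | h
          · exact Or.inl (Or.inr ⟨hgC, h⟩)
          · refine Or.inr (Or.inr ⟨C.inv_mem hgC, ?_⟩)
            exact (Set.mem_inv.mp h)
        · have hne : ((1:G) : G ⧸ C) ≠ (g : G ⧸ C) := fun h => hgC ((coe_eq_one_iff C g).mp h)
          rcases htotal _ _ hne with h | h
          · exact Or.inl (Or.inl h)
          · refine Or.inr (Or.inl ?_)
            have := hinv g⁻¹ _ _ h
            rwa [hsmul, hsmul, inv_mul_cancel, mul_one] at this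
    · -- disjoint
      rw [Set.disjoint_left]
      rintro g (hg | ⟨hgC, hgQ⟩) hg'
      · rw [Set.mem_inv] at hg'
        rcases hg' with h | ⟨hC, _⟩
        · have := hshift g g⁻¹ h
          rw [mul_inv_cancel] at this
          exact hirr _ (htrans _ _ _ hg this)
        · have : g ∈ C := by simpa using C.inv_mem hC
          rw [← (coe_eq_one_iff C g).mpr this] at hg
          exact hirr _ hg
      · rw [Set.mem_inv] at hg'
        rcases hg' with h | ⟨hC, hQ'⟩
        · rw [← (coe_eq_one_iff C g⁻¹).mpr (C.inv_mem hgC)] at h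
          exact hirr _ h
        · have : (⟨g, hgC⟩ : C) ∈ Q⁻¹ := by
            rw [Set.mem_inv]
            show (⟨g⁻¹, C.inv_mem hgC⟩ : C) ∈ Q
            convert hQ'
          exact Set.disjoint_left.mp hQ.2.2 hgQ this
  · -- injectivity
    intro Q₁ Q₂ _ _ hEq
    have key : ∀ (Q Q' : Set C), lexExt C lt' Q = lexExt C lt' Q' → Q ⊆ Q' := by
      intro Q Q' h q hq
      have : (q : G) ∈ lexExt C lt' Q := Or.inr ⟨q.2, by simpa using hq⟩
      rw [h] at this
      rcases this with hlt | ⟨hC, hQ'⟩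
      · rw [← (coe_eq_one_iff C q).mpr q.2] at hlt
        exact absurd hlt (hirr _)
      · simpa using hQ'
    exact le_antisymm (key _ _ hEq) (key _ _ hEq.symm)
end

section
/- In the group H_j = ⟨x₁, …, x_j | x_i x_{i−1} x_i⁻¹ = x_{i−1}⁻¹ for 1 < i ≤ j, x_i x_k = x_k x_i for |i−k| > 1⟩, every element can be written in the form x₁^{a₁} x₂^{a₂} ⋯ x_j^{a_j} with a₁, …, a_j ∈ ℤ. -/
/-- The relator set of the group
`H_j = ⟨x₁, …, x_j ∣ x_i x_{i−1} x_i⁻¹ = x_{i−1}⁻¹ (1 < i ≤ j),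
x_i x_k = x_k x_i (|i − k| > 1)⟩`, with generators indexed by `Fin j`. -/
def HRels (j : ℕ) : Set (FreeGroup (Fin j)) :=
  {r | (∃ i k : Fin j, (i : ℕ) = (k : ℕ) + 1 ∧
          r = FreeGroup.of i * FreeGroup.of k * (FreeGroup.of i)⁻¹ * FreeGroup.of k) ∨
       (∃ i k : Fin j, ((k : ℕ) + 1 < (i : ℕ) ∨ (i : ℕ) + 1 < (k : ℕ)) ∧
          r = FreeGroup.of i * FreeGroup.of k * (FreeGroup.of i)⁻¹ * (FreeGroup.of k)⁻¹)}

namespace HAux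

variable {j : ℕ}

local notation "G" => PresentedGroup (HRels j)

/-- The normal form associated to exponents `a`. -/
def NF (a : Fin j → ℤ) : G :=
  ((List.finRange j).map
    (fun i => (PresentedGroup.of i : G) ^ a i)).prod

lemma rel_one {r : FreeGroup (Fin j)} (hr : r ∈ HRels j) :
    (PresentedGroup.mk (HRels j) r : G) = 1 :=
  (QuotientGroup.eq_one_iff r).mpr (Subgroup.subset_normalClosure hr)

lemma conj_flip {i k : Fin j} (h : (i : ℕ) = (k : ℕ) + 1) :
    (PresentedGroup.of i : G) * PresentedGroup.of k * (PresentedGroup.of i)⁻¹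
      = (PresentedGroup.of k)⁻¹ := by
  have h1 : (PresentedGroup.mk (HRels j)
      (FreeGroup.of i * FreeGroup.of k * (FreeGroup.of i)⁻¹ * FreeGroup.of k) : G) = 1 :=
    rel_one (Or.inl ⟨i, k, h, rfl⟩)
  simp only [map_mul, map_inv] at h1
  exact eq_inv_of_mul_eq_one_left h1

lemma comm_gen {i k : Fin j} (h : (k : ℕ) + 1 < (i : ℕ) ∨ (i : ℕ) + 1 < (k : ℕ)) :
    Commute (PresentedGroup.of i : G) (PresentedGroup.of k) := by
  have h1 : (PresentedGroup.mk (HRels j)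
      (FreeGroup.of i * FreeGroup.of k * (FreeGroup.of i)⁻¹ * (FreeGroup.of k)⁻¹) : G) = 1 :=
    rel_one (Or.inr ⟨i, k, h, rfl⟩)
  simp only [map_mul, map_inv] at h1
  have := eq_inv_of_mul_eq_one_left h1
  rw [inv_inv] at this
  have h2 : (PresentedGroup.mk (HRels j)) (FreeGroup.of i) *
      (PresentedGroup.mk (HRels j)) (FreeGroup.of k) =
      (PresentedGroup.mk (HRels j)) (FreeGroup.of k) *
      (PresentedGroup.mk (HRels j)) (FreeGroup.of i) :=
    mul_inv_eq_iff_eq_mul.mp (mul_inv_eq_one.mp h1)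
  exact h2

lemma flip_zpow {i k : Fin j} (h : (i : ℕ) = (k : ℕ) + 1) (a : ℤ) :
    (PresentedGroup.of i : G) * (PresentedGroup.of k) ^ a * (PresentedGroup.of i)⁻¹
      = (PresentedGroup.of k) ^ (-a) := by
  rw [← conj_zpow, conj_flip h, inv_zpow, zpow_neg]

lemma flip_zpow' {i k : Fin j} (h : (i : ℕ) = (k : ℕ) + 1) (a : ℤ) :
    (PresentedGroup.of i : G)⁻¹ * (PresentedGroup.of k) ^ a * (PresentedGroup.of i)
      = (PresentedGroup.of k) ^ (-a) := by
  have := flip_zpow h (-a)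
  rw [neg_neg] at this
  rw [← this]
  group

/-- sign of the exponent change when pushing `x_i` past `x_k`. -/
def sg (i k : Fin j) : ℤ := if (k : ℕ) + 1 = (i : ℕ) then -1 else 1

lemma step {i k : Fin j} (hk : (k : ℕ) < (i : ℕ)) {ε : ℤ} (hε : ε = 1 ∨ ε = -1) (a : ℤ) :
    (PresentedGroup.of i : G) ^ ε * (PresentedGroup.of k) ^ a
      = (PresentedGroup.of k) ^ (sg i k * a) * (PresentedGroup.of i) ^ ε := by
  unfold sg
  by_cases hik : (k : ℕ) + 1 = (i : ℕ)
  · rw [if_pos hik, neg_one_mul]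
    rcases hε with rfl | rfl
    · rw [zpow_one]
      have := flip_zpow hik.symm a
      rw [← this]; group
    · rw [zpow_neg_one]
      have := flip_zpow' hik.symm a
      rw [← this]; group
  · rw [if_neg hik, one_mul]
    have hc : (k : ℕ) + 1 < (i : ℕ) ∨ (i : ℕ) + 1 < (k : ℕ) := Or.inl (by omega)
    exact (comm_gen hc).zpow_zpow ε a

lemma push (i : Fin j) {ε : ℤ} (hε : ε = 1 ∨ ε = -1) (a : Fin j → ℤ)
    (l : List (Fin j)) (hl : ∀ k ∈ l, (k : ℕ) < (i : ℕ)) :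
    (PresentedGroup.of i : G) ^ ε * (l.map (fun k => (PresentedGroup.of k : G) ^ a k)).prod
      = (l.map (fun k => (PresentedGroup.of k : G) ^ (sg i k * a k))).prod
          * (PresentedGroup.of i) ^ ε := by
  induction l with
  | nil => simp
  | cons k t ih =>
      simp only [List.map_cons, List.prod_cons]
      rw [← mul_assoc, step (hl k (by simp)) hε, mul_assoc,
        ih (fun x hx => hl x (by simp [hx])), ← mul_assoc]

lemma closure_step (i : Fin j) {ε : ℤ} (hε : ε = 1 ∨ ε = -1) (a : Fin j → ℤ) :
    ∃ b : Fin j → ℤ, (PresentedGroup.of i : G) ^ ε * NF a = NF b := by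
  set n := (i : ℕ) with hn
  refine ⟨fun k => if k = i then a i + ε
    else if (k : ℕ) + 1 = n then -(a k) else a k, ?_⟩
  have hnlen : n < (List.finRange j).length := by simp [hn, i.isLt]
  have hsplit : List.finRange j
      = (List.finRange j).take n ++ i :: (List.finRange j).drop (n + 1) := by
    conv_lhs => rw [← List.take_append_drop n (List.finRange j)]
    congr 1
    rw [List.drop_eq_getElem_cons hnlen]
    congr 1
    simp [hn]
  have h1 : ∀ k ∈ (List.finRange j).take n, (k : ℕ) < n := by
    intro k hk
    rw [List.mem_iff_getElem] at hk
    obtain ⟨m, hm, rfl⟩ := hk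
    have hm' := hm
    simp only [List.length_take, List.length_finRange, lt_min_iff] at hm'
    simp only [List.getElem_take, List.getElem_finRange]
    simpa using hm'.1
  have h2 : ∀ k ∈ (List.finRange j).drop (n + 1), n < (k : ℕ) := by
    intro k hk
    rw [List.mem_iff_getElem] at hk
    obtain ⟨m, hm, rfl⟩ := hk
    simp only [List.getElem_drop, List.getElem_finRange]
    simp
    omega
  simp only [NF]
  conv_lhs => rw [hsplit]
  conv_rhs => rw [hsplit]
  simp only [List.map_append, List.prod_append, List.map_cons, List.prod_cons]
  rw [← mul_assoc, push i hε a _ h1]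
  have hTake : ((List.finRange j).take n).map
        (fun k => (PresentedGroup.of k : G) ^ (sg i k * a k))
      = ((List.finRange j).take n).map
        (fun k => (PresentedGroup.of k : G) ^
          (if k = i then a i + ε else if (k : ℕ) + 1 = n then -(a k) else a k)) := by
    refine List.map_congr_left (fun k hk => ?_)
    have hki : (k : ℕ) < n := h1 k hk
    have : k ≠ i := by intro h; rw [h] at hki; omega
    rw [if_neg this]
    unfold sg
    rw [← hn]
    split_ifs <;> ring_nf
  have hDrop : ((List.finRange j).drop (n + 1)).map
        (fun k => (PresentedGroup.of k : G) ^ (a k))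
      = ((List.finRange j).drop (n + 1)).map
        (fun k => (PresentedGroup.of k : G) ^
          (if k = i then a i + ε else if (k : ℕ) + 1 = n then -(a k) else a k)) := by
    refine List.map_congr_left (fun k hk => ?_)
    have hki : n < (k : ℕ) := h2 k hk
    have h3 : k ≠ i := by intro h; rw [h] at hki; omega
    have h4 : ¬ ((k : ℕ) + 1 = n) := by omega
    rw [if_neg h3, if_neg h4]
  rw [hTake, hDrop, mul_assoc, ← mul_assoc ((PresentedGroup.of i : G) ^ ε), ← zpow_add]
  have hbi : ε + a i = (if i = i then a i + ε
      else if (i : ℕ) + 1 = n then -(a i) else a i) := by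
    simp [add_comm]
  rw [hbi]
  simp

lemma NF_zero : (NF (fun _ => 0) : G) = 1 := by
  simp [NF]

theorem main (g : G) : ∃ a : Fin j → ℤ, g = NF a := by
  induction g with
  | _ z =>
    suffices h : ∀ w : FreeGroup (Fin j), ∀ g : G, (∃ a, g = NF a) →
        ∃ b, (PresentedGroup.mk (HRels j) w) * g = NF b by
      have := h z 1 ⟨fun _ => 0, NF_zero.symm⟩
      simpa using this
    intro w
    induction w using FreeGroup.induction_on with
    | C1 => intro g hg; simpa using hg
    | of x =>
        intro g hg
        obtain ⟨a, rfl⟩ := hg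
        obtain ⟨b, hb⟩ := closure_step x (Or.inl rfl) a
        refine ⟨b, ?_⟩
        rw [← hb, zpow_one]
        rfl
    | inv_of x _ =>
        intro g hg
        obtain ⟨a, rfl⟩ := hg
        obtain ⟨b, hb⟩ := closure_step x (Or.inr rfl) a
        refine ⟨b, ?_⟩
        rw [← hb, zpow_neg_one, map_inv]
        rfl
    | mul x y hx hy =>
        intro g hg
        obtain ⟨b, hb⟩ := hy g hg
        obtain ⟨c, hc⟩ := hx _ ⟨b, hb⟩
        refine ⟨c, ?_⟩
        rw [← hc, map_mul, mul_assoc]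

end HAux

/-- Every element of `H_j` can be written in the normal form
`x₁^{a₁} x₂^{a₂} ⋯ x_j^{a_j}` with `a₁, …, a_j ∈ ℤ`. -/
theorem H_normal_form (j : ℕ) (g : PresentedGroup (HRels j)) :
    ∃ a : Fin j → ℤ,
      g = ((List.finRange j).map
            (fun i => (PresentedGroup.of i : PresentedGroup (HRels j)) ^ a i)).prod := by
  exact HAux.main g
end

section
/- For n ≥ 2 and any irrational α ∈ ℝ, the set P_α = {g ∈ BS(1,n) : ρ(g)(α) > α} is a positive cone of BS(1,n), where ρ is the standard affine representation ρ(a)(x) = x+1, ρ(b)(x) = nx. -/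
/-- The single relator `b a b⁻¹ a⁻ⁿ` of the Baumslag–Solitar group `BS(1,n)`, with
generators indexed by `Bool` (`false ↦ a`, `true ↦ b`). -/
def BSRels (n : ℕ) : Set (FreeGroup Bool) :=
  {FreeGroup.of true * FreeGroup.of false * (FreeGroup.of true)⁻¹ * (FreeGroup.of false ^ n)⁻¹}

/-- The Baumslag–Solitar group `BS(1,n) = ⟨a, b ∣ b a b⁻¹ = aⁿ⟩`. -/
abbrev BS (n : ℕ) := PresentedGroup (BSRels n)

/-- The generator `a` of `BS(1,n)`. -/
def BSa (n : ℕ) : BS n := PresentedGroup.of false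

/-- The generator `b` of `BS(1,n)`. -/
def BSb (n : ℕ) : BS n := PresentedGroup.of true

/-- The defining relation of `BS(1,n)`. -/
lemma bs_rel (n : ℕ) : BSb n * BSa n * (BSb n)⁻¹ = (BSa n) ^ n := by
  have h : PresentedGroup.mk (BSRels n)
      (FreeGroup.of true * FreeGroup.of false * (FreeGroup.of true)⁻¹ *
        (FreeGroup.of false ^ n)⁻¹) = 1 := by
    apply (QuotientGroup.eq_one_iff _).mpr
    exact Subgroup.subset_normalClosure (by simp [BSRels])
  simp only [map_mul, map_inv, map_pow] at h
  have := mul_inv_eq_one.mp h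
  exact this

lemma bs_conj_zpow (n : ℕ) (q : ℤ) :
    BSb n * (BSa n) ^ q * (BSb n)⁻¹ = (BSa n) ^ ((n : ℤ) * q) := by
  rw [← conj_zpow, bs_rel n, ← zpow_natCast, ← zpow_mul]

lemma bs_pow_conj (n : ℕ) (d : ℕ) (m : ℤ) :
    (BSb n) ^ d * (BSa n) ^ m * ((BSb n) ^ d)⁻¹ = (BSa n) ^ ((n : ℤ) ^ d * m) := by
  induction d with
  | zero => simp
  | succ d ih =>
    have : (BSb n) ^ (d + 1) * (BSa n) ^ m * ((BSb n) ^ (d + 1))⁻¹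
        = BSb n * ((BSb n) ^ d * (BSa n) ^ m * ((BSb n) ^ d)⁻¹) * (BSb n)⁻¹ := by
      rw [pow_succ']
      group
    rw [this, ih, bs_conj_zpow]
    ring_nf

/-- Move `b^d` across a power of `a` (to the right). -/
lemma bs_move (n : ℕ) (d : ℕ) (m : ℤ) :
    (BSb n) ^ d * (BSa n) ^ m = (BSa n) ^ ((n : ℤ) ^ d * m) * (BSb n) ^ d := by
  have := bs_pow_conj n d m
  calc (BSb n) ^ d * (BSa n) ^ m
      = ((BSb n) ^ d * (BSa n) ^ m * ((BSb n) ^ d)⁻¹) * (BSb n) ^ d := by group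
    _ = (BSa n) ^ ((n : ℤ) ^ d * m) * (BSb n) ^ d := by rw [this]

/-- Move `b^{-d}` across a power of `a` (to the left). -/
lemma bs_move' (n : ℕ) (d : ℕ) (m : ℤ) :
    (BSa n) ^ m * ((BSb n) ^ d)⁻¹ = ((BSb n) ^ d)⁻¹ * (BSa n) ^ ((n : ℤ) ^ d * m) := by
  have := bs_move n d m
  calc (BSa n) ^ m * ((BSb n) ^ d)⁻¹
      = ((BSb n) ^ d)⁻¹ * ((BSb n) ^ d * (BSa n) ^ m) * ((BSb n) ^ d)⁻¹ := by group
    _ = ((BSb n) ^ d)⁻¹ * ((BSa n) ^ ((n : ℤ) ^ d * m) * (BSb n) ^ d) * ((BSb n) ^ d)⁻¹ := by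
        rw [this]
    _ = ((BSb n) ^ d)⁻¹ * (BSa n) ^ ((n : ℤ) ^ d * m) := by group

/-- Normal form: every element of `BS(1,n)` is `b^{-i} a^m b^j`. -/
lemma bs_nf (n : ℕ) (g : BS n) :
    ∃ (i j : ℕ) (m : ℤ), g = ((BSb n) ^ i)⁻¹ * (BSa n) ^ m * (BSb n) ^ j := by
  set S : Set (BS n) :=
    {g | ∃ (i j : ℕ) (m : ℤ), g = ((BSb n) ^ i)⁻¹ * (BSa n) ^ m * (BSb n) ^ j} with hS
  have hone : (1 : BS n) ∈ S := ⟨0, 0, 0, by simp⟩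
  have hmul : ∀ x ∈ S, ∀ y ∈ S, x * y ∈ S := by
    rintro x ⟨i, j, m, rfl⟩ y ⟨k, l, p, rfl⟩
    rcases le_or_gt k j with h | h
    · obtain ⟨d, rfl⟩ : ∃ d, j = k + d := ⟨j - k, by omega⟩
      refine ⟨i, d + l, m + (n : ℤ) ^ d * p, ?_⟩
      have h1 : (BSb n) ^ (k + d) * ((BSb n) ^ k)⁻¹ = (BSb n) ^ d := by
        rw [pow_add]; group
      calc ((BSb n) ^ i)⁻¹ * (BSa n) ^ m * (BSb n) ^ (k + d) *
            (((BSb n) ^ k)⁻¹ * (BSa n) ^ p * (BSb n) ^ l)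
          = ((BSb n) ^ i)⁻¹ * (BSa n) ^ m *
              ((BSb n) ^ (k + d) * ((BSb n) ^ k)⁻¹) * (BSa n) ^ p * (BSb n) ^ l := by group
        _ = ((BSb n) ^ i)⁻¹ * (BSa n) ^ m *
              ((BSb n) ^ d * (BSa n) ^ p) * (BSb n) ^ l := by rw [h1]; group
        _ = ((BSb n) ^ i)⁻¹ * (BSa n) ^ m *
              ((BSa n) ^ ((n : ℤ) ^ d * p) * (BSb n) ^ d) * (BSb n) ^ l := by rw [bs_move]
        _ = ((BSb n) ^ i)⁻¹ * (BSa n) ^ (m + (n : ℤ) ^ d * p) * (BSb n) ^ (d + l) := by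
            rw [zpow_add, pow_add]; group
    · obtain ⟨d, rfl⟩ : ∃ d, k = j + d := ⟨k - j, by omega⟩
      refine ⟨i + d, l, (n : ℤ) ^ d * m + p, ?_⟩
      have h1 : (BSb n) ^ j * ((BSb n) ^ (j + d))⁻¹ = ((BSb n) ^ d)⁻¹ := by
        rw [pow_add]; group
      calc ((BSb n) ^ i)⁻¹ * (BSa n) ^ m * (BSb n) ^ j *
            (((BSb n) ^ (j + d))⁻¹ * (BSa n) ^ p * (BSb n) ^ l)
          = ((BSb n) ^ i)⁻¹ * ((BSa n) ^ m *
              ((BSb n) ^ j * ((BSb n) ^ (j + d))⁻¹)) * (BSa n) ^ p * (BSb n) ^ l := by group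
        _ = ((BSb n) ^ i)⁻¹ * ((BSa n) ^ m * ((BSb n) ^ d)⁻¹) * (BSa n) ^ p *
              (BSb n) ^ l := by rw [h1]
        _ = ((BSb n) ^ i)⁻¹ * (((BSb n) ^ d)⁻¹ * (BSa n) ^ ((n : ℤ) ^ d * m)) * (BSa n) ^ p *
              (BSb n) ^ l := by rw [bs_move']
        _ = ((BSb n) ^ (i + d))⁻¹ * (BSa n) ^ ((n : ℤ) ^ d * m + p) * (BSb n) ^ l := by
            rw [zpow_add, pow_add]; group
  have hinv : ∀ x ∈ S, x⁻¹ ∈ S := by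
    rintro x ⟨i, j, m, rfl⟩
    exact ⟨j, i, -m, by group⟩
  let H : Subgroup (BS n) :=
    { carrier := S
      one_mem' := hone
      mul_mem' := fun hx hy => hmul _ hx _ hy
      inv_mem' := fun hx => hinv _ hx }
  have : g ∈ H := by
    apply PresentedGroup.generated_by
    intro j
    cases j with
    | false => exact ⟨0, 0, 1, by simp [BSa]⟩
    | true => exact ⟨0, 1, 0, by simp [BSb]⟩
  exact this

section Perm

variable {n : ℕ} {A B : Equiv.Perm ℝ}

lemma A_pow (hA : ∀ x, A x = x + 1) (k : ℕ) (x : ℝ) : (A ^ k) x = x + k := by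
  induction k with
  | zero => simp
  | succ k ih => rw [pow_succ', Equiv.Perm.mul_apply, ih, hA]; push_cast; ring

lemma A_zpow (hA : ∀ x, A x = x + 1) (m : ℤ) (x : ℝ) : (A ^ m) x = x + m := by
  cases m with
  | ofNat k => simpa using A_pow hA k x
  | negSucc k =>
    have h1 : (A ^ (Int.negSucc k)) = (A ^ (k + 1))⁻¹ := by
      rw [zpow_negSucc]
    rw [h1]
    apply (A ^ (k + 1)).injective
    rw [Equiv.Perm.inv_def, Equiv.apply_symm_apply, A_pow hA]
    push_cast; ring

lemma B_pow (hB : ∀ x, B x = n * x) (k : ℕ) (x : ℝ) : (B ^ k) x = n ^ k * x := by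
  induction k with
  | zero => simp
  | succ k ih => rw [pow_succ', Equiv.Perm.mul_apply, ih, hB]; ring

lemma B_pow_inv (hn : 2 ≤ n) (hB : ∀ x, B x = n * x) (k : ℕ) (x : ℝ) :
    ((B ^ k)⁻¹) x = x / n ^ k := by
  have hnk : ((n : ℝ)) ^ k ≠ 0 := by positivity
  apply (B ^ k).injective
  rw [Equiv.Perm.inv_def, Equiv.apply_symm_apply, B_pow hB, mul_div_cancel₀ _ hnk]

end Perm

/-- For `n ≥ 2` and irrational `α`, the Smirnov set
`P_α = {g ∈ BS(1,n) : ρ(g)(α) > α}` is a positive cone of `BS(1,n)`. -/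
theorem smirnov_positive_cone (n : ℕ) (hn : 2 ≤ n) (A B : Equiv.Perm ℝ)
    (hA : ∀ x, A x = x + 1) (hB : ∀ x, B x = n * x)
    (ρ : BS n →* Equiv.Perm ℝ) (hρa : ρ (BSa n) = A) (hρb : ρ (BSb n) = B)
    (α : ℝ) (hα : Irrational α) :
    IsPositiveCone {g : BS n | α < ρ g α} := by
  have hn0 : (0 : ℝ) < n := by positivity
  -- the affine formula for ρ g
  have key : ∀ g : BS n, ∃ (i j : ℕ) (m : ℤ),
      (g = ((BSb n) ^ i)⁻¹ * (BSa n) ^ m * (BSb n) ^ j) ∧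
      (∀ x : ℝ, ρ g x = ((n : ℝ) ^ j * x + m) / (n : ℝ) ^ i) := by
    intro g
    obtain ⟨i, j, m, rfl⟩ := bs_nf n g
    refine ⟨i, j, m, rfl, fun x => ?_⟩
    rw [map_mul, map_mul, map_inv, map_pow, map_zpow, map_pow, hρa, hρb,
      Equiv.Perm.mul_apply, Equiv.Perm.mul_apply, B_pow hB, A_zpow hA, B_pow_inv hn hB]
  -- strict monotonicity
  have mono : ∀ (g : BS n) (x y : ℝ), x < y → ρ g x < ρ g y := by
    intro g x y hxy
    obtain ⟨i, j, m, -, hf⟩ := key g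
    rw [hf, hf]
    have h1 : (0 : ℝ) < (n : ℝ) ^ i := by positivity
    have h2 : (0 : ℝ) < (n : ℝ) ^ j := by positivity
    gcongr
  -- no fixed point at α except identity
  have fix : ∀ g : BS n, ρ g α = α → g = 1 := by
    intro g hg
    obtain ⟨i, j, m, hgeq, hf⟩ := key g
    rw [hf] at hg
    have hni : ((n : ℝ)) ^ i ≠ 0 := by positivity
    have heq : (n : ℝ) ^ j * α + m = (n : ℝ) ^ i * α := by
      field_simp at hg; linarith
    have hij : i = j := by
      by_contra hne
      have hc : ((n : ℝ)) ^ i - (n : ℝ) ^ j ≠ 0 := by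
        intro h
        apply hne
        have : ((n : ℝ)) ^ i = (n : ℝ) ^ j := by linarith
        have : ((n : ℕ)) ^ i = (n : ℕ) ^ j := by exact_mod_cast this
        exact Nat.pow_right_injective hn this
      have : α = (m : ℝ) / ((n : ℝ) ^ i - (n : ℝ) ^ j) := by
        field_simp
        linarith
      apply hα
      refine ⟨(m : ℚ) / ((n : ℚ) ^ i - (n : ℚ) ^ j), ?_⟩
      rw [this]
      push_cast
      ring
    subst hij
    have hm : (m : ℝ) = 0 := by linarith
    have hm0 : m = 0 := by exact_mod_cast hm
    rw [hgeq, hm0]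
    group
  have happly : ∀ (g h : BS n) (x : ℝ), ρ (g * h) x = ρ g (ρ h x) := by
    intro g h x; rw [map_mul, Equiv.Perm.mul_apply]
  have hinv_pos : ∀ g : BS n, ρ g α < α → α < ρ g⁻¹ α := by
    intro g h
    have := mono g⁻¹ _ _ h
    rwa [← happly, inv_mul_cancel, map_one, Equiv.Perm.one_apply] at this
  refine ⟨?_, ?_, ?_⟩
  · intro g hg h hh
    have : ρ g α < ρ g (ρ h α) := mono g _ _ hh
    have : α < ρ g (ρ h α) := lt_trans hg this
    simpa [Set.mem_setOf_eq, happly] using this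
  · ext g
    simp only [Set.mem_union, Set.mem_setOf_eq, Set.mem_inv, Set.mem_compl_iff,
      Set.mem_singleton_iff]
    constructor
    · rintro (h | h) rfl
      · simp [map_one] at h
      · simp [map_one] at h
    · intro hg
      have hne : ρ g α ≠ α := fun h => hg (fix g h)
      rcases lt_or_gt_of_ne hne with h | h
      · right
        exact hinv_pos g h
      · left; exact h
  · rw [Set.disjoint_left]
    rintro g hg hg'
    simp only [Set.mem_inv, Set.mem_setOf_eq] at hg hg'
    have : ρ g α < ρ g (ρ g⁻¹ α) := mono g _ _ hg'
    rw [← happly, mul_inv_cancel, map_one, Equiv.Perm.one_apply] at this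
    exact absurd (lt_trans hg this) (lt_irrefl α)
end

section
/- For n ≥ 2, if α < β are irrational real numbers, then there exists g ∈ BS(1,n) such that ρ(g)(α) < α and ρ(g)(β) > β; consequently the map α ↦ P_α = {g : ρ(g)(α) > α} from irrationals to positive cones of BS(1,n) is injective. -/
private lemma perm_zpow_add (A : Equiv.Perm ℝ) (hA : ∀ x, A x = x + 1) :
    ∀ (k : ℤ) (x : ℝ), (A ^ k) x = x + k := by
  have hinv : ∀ x : ℝ, A⁻¹ x = x - 1 := by
    intro x
    rw [show (A⁻¹ : Equiv.Perm ℝ) = A.symm from rfl, Equiv.symm_apply_eq, hA]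
    ring
  intro k
  induction k using Int.induction_on with
  | zero => simp
  | succ m ih =>
      intro x
      rw [zpow_add_one, Equiv.Perm.mul_apply, ih, hA]
      push_cast; ring
  | pred m ih =>
      intro x
      rw [show (-(m:ℤ) - 1) = (-(m:ℤ)) - 1 from rfl, zpow_sub_one, Equiv.Perm.mul_apply,
        hinv, ih]
      push_cast; ring

private lemma perm_zpow_mul (n : ℕ) (hn : 2 ≤ n) (B : Equiv.Perm ℝ)
    (hB : ∀ x, B x = n * x) :
    ∀ (k : ℤ) (x : ℝ), (B ^ k) x = (n : ℝ) ^ k * x := by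
  have hn0 : (n : ℝ) ≠ 0 := by positivity
  have hinv : ∀ x : ℝ, B⁻¹ x = x / n := by
    intro x
    rw [show (B⁻¹ : Equiv.Perm ℝ) = B.symm from rfl, Equiv.symm_apply_eq, hB]
    field_simp
  intro k
  induction k using Int.induction_on with
  | zero => simp
  | succ m ih =>
      intro x
      rw [zpow_add_one, Equiv.Perm.mul_apply, ih, hB, zpow_add_one₀ hn0]
      ring
  | pred m ih =>
      intro x
      rw [show (-(m:ℤ) - 1) = (-(m:ℤ)) - 1 from rfl, zpow_sub_one, Equiv.Perm.mul_apply,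
        hinv, ih, zpow_sub_one₀ hn0]
      field_simp

private lemma smirnov_key (n : ℕ) (hn : 2 ≤ n) (A B : Equiv.Perm ℝ)
    (hA : ∀ x, A x = x + 1) (hB : ∀ x, B x = n * x)
    (ρ : BS n →* Equiv.Perm ℝ) (hρa : ρ (BSa n) = A) (hρb : ρ (BSb n) = B)
    (α β : ℝ) (hα : Irrational α) (hαβ : α < β) :
    ∃ g : BS n, ρ g α < α ∧ β < ρ g β := by
  have hn1 : (1 : ℝ) < n := by exact_mod_cast hn.trans_lt' one_lt_two
  have hn1' : (0 : ℝ) < (n : ℝ) - 1 := by linarith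
  -- choose t with (n:ℝ)^t * (n-1) * (β - α) > 1
  obtain ⟨t, ht⟩ := pow_unbounded_of_one_lt (1 / (((n : ℝ) - 1) * (β - α))) hn1
  set M : ℝ := (n : ℝ) ^ t * ((n : ℝ) - 1) with hM
  have hMpos : 0 < M := by positivity
  have hMgt : 1 < M * (β - α) := by
    have hβα : 0 < β - α := by linarith
    rw [div_lt_iff₀ (by positivity)] at ht
    nlinarith [ht]
  set s : ℤ := ⌈α * M⌉ with hs
  -- α * M is irrational
  have hMnat : M = ((n ^ t * (n - 1) : ℕ) : ℝ) := by
    push_cast [Nat.cast_sub (by omega : 1 ≤ n)]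
    ring
  have hirr : Irrational (α * M) := by
    rw [hMnat]
    exact hα.mul_natCast (Nat.mul_ne_zero (pow_ne_zero _ (by omega)) (by omega))
  have h1 : α * M < s := lt_of_le_of_ne (Int.le_ceil _) (fun h => hirr.ne_int s h)
  have h2 : (s : ℝ) < β * M := by
    have := Int.ceil_lt_add_one (α * M)
    rw [← hs] at this
    nlinarith
  -- the group element
  refine ⟨(BSb n) ^ (-(t : ℤ)) * ((BSa n) ^ (-s) * (BSb n) ^ ((t : ℤ) + 1)), ?_, ?_⟩
  all_goals
    rw [map_mul, map_mul, map_zpow, map_zpow, map_zpow, hρa, hρb, Equiv.Perm.mul_apply,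
      Equiv.Perm.mul_apply]
  · rw [perm_zpow_mul n hn B hB, perm_zpow_add A hA, perm_zpow_mul n hn B hB]
    have expand : (n : ℝ) ^ (-(t:ℤ)) * ((n : ℝ) ^ ((t:ℤ)+1) * α + (-s : ℤ)) - α
        = (((n:ℝ) - 1) * (α * M - s)) / M := by
      have hnt : ((n:ℝ)^t) ≠ 0 := by positivity
      rw [hM]
      rw [zpow_neg, zpow_add_one₀ (by positivity), zpow_natCast]
      field_simp
      push_cast; ring
    nlinarith [div_neg_of_neg_of_pos
      (mul_neg_of_pos_of_neg hn1' (by linarith : α * M - s < 0)) hMpos]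
  · rw [perm_zpow_mul n hn B hB, perm_zpow_add A hA, perm_zpow_mul n hn B hB]
    have expand : (n : ℝ) ^ (-(t:ℤ)) * ((n : ℝ) ^ ((t:ℤ)+1) * β + (-s : ℤ)) - β
        = (((n:ℝ) - 1) * (β * M - s)) / M := by
      rw [hM, zpow_neg, zpow_add_one₀ (by positivity), zpow_natCast]
      field_simp
      push_cast; ring
    nlinarith [div_pos (mul_pos hn1' (by linarith : 0 < β * M - s)) hMpos]

/-- For `n ≥ 2` and irrationals `α < β` there is `g ∈ BS(1,n)` with
`ρ(g)(α) < α` and `ρ(g)(β) > β`; consequently `α ↦ P_α = {g : ρ(g)(α) > α}` is injective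
on irrationals. -/
theorem smirnov_injective (n : ℕ) (hn : 2 ≤ n) (A B : Equiv.Perm ℝ)
    (hA : ∀ x, A x = x + 1) (hB : ∀ x, B x = n * x)
    (ρ : BS n →* Equiv.Perm ℝ) (hρa : ρ (BSa n) = A) (hρb : ρ (BSb n) = B)
    (α β : ℝ) (hα : Irrational α) (hβ : Irrational β) :
    (α < β → ∃ g : BS n, ρ g α < α ∧ β < ρ g β) ∧
    ({g : BS n | α < ρ g α} = {g : BS n | β < ρ g β} → α = β) := by
  constructor
  · intro hαβ
    exact smirnov_key n hn A B hA hB ρ hρa hρb α β hα hαβ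
  · intro hset
    by_contra hne
    rcases lt_or_gt_of_ne hne with h | h
    · obtain ⟨g, hg1, hg2⟩ := smirnov_key n hn A B hA hB ρ hρa hρb α β hα h
      have : g ∈ {g : BS n | α < ρ g α} := hset ▸ hg2
      exact absurd this (by simpa using hg1.le.not_gt ∘ id)
    · obtain ⟨g, hg1, hg2⟩ := smirnov_key n hn A B hA hB ρ hρa hρb β α hβ h
      have : g ∈ {g : BS n | β < ρ g β} := hset ▸ hg2
      exact absurd this (not_lt.mpr hg1.le)
end

section
/- Let S ⊂ [0,1] be a finite set and x, y ∈ [0,1] \ S with x ≠ y, x and y not endpoints of [0,1]. Then there exists a piecewise-linear homeomorphism f of [0,1] with dyadic rational breakpoints and slopes that are integer powers of 2 (i.e., an element of Thompson's group F in its standard realization) such that f(s) = s for all s ∈ S, f(x) > x, and f(y) < y. -/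
/-- A real number is dyadic rational. -/
def IsDyadic (x : ℝ) : Prop := ∃ (a : ℤ) (k : ℕ), x = (a : ℝ) / 2 ^ k

lemma IsDyadic.add {x y : ℝ} (hx : IsDyadic x) (hy : IsDyadic y) : IsDyadic (x + y) := by
  obtain ⟨a, k, rfl⟩ := hx
  obtain ⟨b, l, rfl⟩ := hy
  refine ⟨a * 2 ^ l + b * 2 ^ k, k + l, ?_⟩
  have h1 : ((2:ℝ)) ^ k ≠ 0 := by positivity
  have h2 : ((2:ℝ)) ^ l ≠ 0 := by positivity
  push_cast
  rw [pow_add, div_add_div _ _ h1 h2]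
  ring_nf

lemma IsDyadic.half {x : ℝ} (hx : IsDyadic x) : IsDyadic (x / 2) := by
  obtain ⟨a, k, rfl⟩ := hx
  exact ⟨a, k + 1, by rw [pow_succ]; ring⟩

lemma dyadic_dense {u v : ℝ} (h : u < v) : ∃ q, IsDyadic q ∧ u < q ∧ q < v := by
  obtain ⟨k, hk⟩ := pow_unbounded_of_one_lt ((v - u)⁻¹) (one_lt_two (α := ℝ))
  have h2k : (0:ℝ) < 2 ^ k := by positivity
  have h1 : 1 < (v - u) * 2 ^ k := by
    rw [inv_lt_iff_one_lt_mul₀ (by linarith)] at hk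
    linarith [hk]
  refine ⟨(⌊u * 2 ^ k⌋ + 1 : ℤ) / 2 ^ k, ⟨_, k, rfl⟩, ?_, ?_⟩
  · rw [lt_div_iff₀ h2k]
    push_cast
    exact Int.lt_floor_add_one _
  · rw [div_lt_iff₀ h2k]
    push_cast
    have := Int.floor_le (u * 2 ^ k)
    nlinarith

/-- The basic bump: identity outside `[a,b]`, pushes up (`e = true`) or down (`e = false`)
strictly inside. -/
noncomputable def bump (e : Bool) (a b t : ℝ) : ℝ :=
  if e then max t (min (2 * t - a) (min (t + (b - a) / 4) ((t + b) / 2)))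
  else min t (max (2 * t - b) (max (t - (b - a) / 4) ((t + a) / 2)))

lemma bump_strictMono (e : Bool) (a b : ℝ) : StrictMono (bump e a b) := by
  intro u v huv
  cases e
  · simp only [bump, Bool.false_eq_true, if_false]
    exact min_lt_min huv (max_lt_max (by linarith) (max_lt_max (by linarith) (by linarith)))
  · simp only [bump, if_true]
    exact max_lt_max huv (min_lt_min (by linarith) (min_lt_min (by linarith) (by linarith)))

lemma bump_continuous (e : Bool) (a b : ℝ) : Continuous (bump e a b) := by
  cases e
  · show Continuous fun t : ℝ => min t (max (2 * t - b) (max (t - (b - a) / 4) ((t + a) / 2)))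
    fun_prop
  · show Continuous fun t : ℝ => max t (min (2 * t - a) (min (t + (b - a) / 4) ((t + b) / 2)))
    fun_prop

lemma bump_id {e : Bool} {a b t : ℝ} (hab : a ≤ b) (h : t ≤ a ∨ b ≤ t) :
    bump e a b t = t := by
  cases e <;> simp only [bump, if_true, if_false, Bool.false_eq_true]
  · -- false case : min t (max ...) = t
    rcases h with h | h
    · exact min_eq_left (le_trans (by linarith : t ≤ (t + a)/2)
        (le_max_of_le_right (le_max_right _ _)))
    · exact min_eq_left (le_max_of_le_left (by linarith))
  · rcases h with h | h
    · exact max_eq_left (le_trans (min_le_left _ _) (by linarith))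
    · exact max_eq_left (le_trans (min_le_of_right_le (min_le_right _ _)) (by linarith))

lemma bump_fix_left {e : Bool} {a b : ℝ} (hab : a ≤ b) : bump e a b a = a :=
  bump_id hab (Or.inl le_rfl)

lemma bump_fix_right {e : Bool} {a b : ℝ} (hab : a ≤ b) : bump e a b b = b :=
  bump_id hab (Or.inr le_rfl)

lemma bump_mem {e : Bool} {a b t : ℝ} (hab : a ≤ b) (ht : t ∈ Set.Icc a b) :
    bump e a b t ∈ Set.Icc a b := by
  constructor
  · calc a = bump e a b a := (bump_fix_left hab).symm
    _ ≤ bump e a b t := (bump_strictMono e a b).monotone ht.1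
  · calc bump e a b t ≤ bump e a b b := (bump_strictMono e a b).monotone ht.2
    _ = b := bump_fix_right hab

lemma bump_gt {a b t : ℝ} (hab : a < b) (ht : t ∈ Set.Ioo a b) : t < bump true a b t := by
  simp only [bump, if_true]
  have h1 : t < 2 * t - a := by linarith [ht.1]
  have h2 : t < t + (b - a) / 4 := by linarith
  have h3 : t < (t + b) / 2 := by linarith [ht.2]
  calc t < min (2 * t - a) (min (t + (b - a) / 4) ((t + b) / 2)) := by
        simp [lt_min_iff, h1, h2, h3]
    _ ≤ _ := le_max_right _ _

lemma bump_lt {a b t : ℝ} (hab : a < b) (ht : t ∈ Set.Ioo a b) : bump false a b t < t := by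
  simp only [bump, Bool.false_eq_true, if_false]
  have h1 : 2 * t - b < t := by linarith [ht.2]
  have h2 : t - (b - a) / 4 < t := by linarith
  have h3 : (t + a) / 2 < t := by linarith [ht.1]
  calc min t (max (2 * t - b) (max (t - (b - a) / 4) ((t + a) / 2)))
      ≤ max (2 * t - b) (max (t - (b - a) / 4) ((t + a) / 2)) := min_le_right _ _
    _ < t := by simp [max_lt_iff, h1, h2, h3]

-- evaluation on pieces, up direction
lemma bump_true_eval1 {a b t : ℝ} (hab : a < b) (ht : t ∈ Set.Icc a ((3*a+b)/4)) :
    bump true a b t = 2 * t - a := by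
  obtain ⟨h1, h2⟩ := ht
  simp only [bump, if_true]
  rw [min_eq_left (show t + (b - a) / 4 ≤ (t + b) / 2 by linarith),
    min_eq_left (by linarith), max_eq_right (by linarith)]

lemma bump_true_eval2 {a b t : ℝ} (hab : a < b) (ht : t ∈ Set.Icc ((3*a+b)/4) ((a+b)/2)) :
    bump true a b t = t + (b - a) / 4 := by
  obtain ⟨h1, h2⟩ := ht
  simp only [bump, if_true]
  rw [min_eq_left (show t + (b - a) / 4 ≤ (t + b) / 2 by linarith),
    min_eq_right (by linarith), max_eq_right (by linarith)]

lemma bump_true_eval3 {a b t : ℝ} (hab : a < b) (ht : t ∈ Set.Icc ((a+b)/2) b) :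
    bump true a b t = (t + b) / 2 := by
  obtain ⟨h1, h2⟩ := ht
  simp only [bump, if_true]
  rw [min_eq_right (show (t + b) / 2 ≤ t + (b - a) / 4 by linarith),
    min_eq_right (by linarith), max_eq_right (by linarith)]

-- evaluation on pieces, down direction
lemma bump_false_eval1 {a b t : ℝ} (hab : a < b) (ht : t ∈ Set.Icc a ((a+b)/2)) :
    bump false a b t = (t + a) / 2 := by
  obtain ⟨h1, h2⟩ := ht
  simp only [bump, Bool.false_eq_true, if_false]
  rw [max_eq_right (show t - (b - a) / 4 ≤ (t + a) / 2 by linarith),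
    max_eq_right (by linarith), min_eq_right (by linarith)]

lemma bump_false_eval2 {a b t : ℝ} (hab : a < b) (ht : t ∈ Set.Icc ((a+b)/2) ((a+3*b)/4)) :
    bump false a b t = t - (b - a) / 4 := by
  obtain ⟨h1, h2⟩ := ht
  simp only [bump, Bool.false_eq_true, if_false]
  rw [max_eq_left (show (t + a) / 2 ≤ t - (b - a) / 4 by linarith),
    max_eq_right (by linarith), min_eq_right (by linarith)]

lemma bump_false_eval3 {a b t : ℝ} (hab : a < b) (ht : t ∈ Set.Icc ((a+3*b)/4) b) :
    bump false a b t = 2 * t - b := by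
  obtain ⟨h1, h2⟩ := ht
  simp only [bump, Bool.false_eq_true, if_false]
  rw [max_eq_left (show (t + a) / 2 ≤ t - (b - a) / 4 by linarith),
    max_eq_left (by linarith), min_eq_right (by linarith)]

/-- `f` restricts to an element of Thompson's group `F` in its standard realization: an
orientation-preserving homeomorphism of `[0,1]` which is piecewise linear with finitely
many breakpoints, all dyadic rational, and all slopes integer powers of `2`. -/
def InThompsonF (f : ℝ → ℝ) : Prop :=
  Set.BijOn f (Set.Icc 0 1) (Set.Icc 0 1) ∧
  StrictMonoOn f (Set.Icc 0 1) ∧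
  ContinuousOn f (Set.Icc 0 1) ∧
  f 0 = 0 ∧ f 1 = 1 ∧
  ∃ (m : ℕ) (pts : Fin (m + 1) → ℝ),
    StrictMono pts ∧ pts 0 = 0 ∧ pts (Fin.last m) = 1 ∧ (∀ i, IsDyadic (pts i)) ∧
    ∀ i : Fin m, ∃ (k : ℤ) (c : ℝ),
      ∀ t ∈ Set.Icc (pts i.castSucc) (pts i.succ), f t = 2 ^ k * t + c

lemma IsDyadic.zero : IsDyadic 0 := ⟨0, 0, by norm_num⟩
lemma IsDyadic.one : IsDyadic 1 := ⟨1, 0, by norm_num⟩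

lemma IsDyadic.mid {a b : ℝ} (da : IsDyadic a) (db : IsDyadic b) : IsDyadic ((a + b) / 2) :=
  (da.add db).half

lemma IsDyadic.q1 {a b : ℝ} (da : IsDyadic a) (db : IsDyadic b) : IsDyadic ((3 * a + b) / 4) := by
  have e : (3 * a + b) / 4 = (a + (a + b) / 2) / 2 := by ring
  rw [e]; exact (da.add (da.mid db)).half

lemma IsDyadic.q3 {a b : ℝ} (da : IsDyadic a) (db : IsDyadic b) : IsDyadic ((a + 3 * b) / 4) := by
  have e : (a + 3 * b) / 4 = (b + (a + b) / 2) / 2 := by ring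
  rw [e]; exact (db.add (da.mid db)).half

lemma key (e1 e2 : Bool) (a b c d : ℝ) (h0a : 0 < a) (hab : a < b) (hbc : b < c)
    (hcd : c < d) (hd1 : d < 1) (da : IsDyadic a) (db : IsDyadic b) (dc : IsDyadic c)
    (dd : IsDyadic d) :
    ∃ f : ℝ → ℝ, InThompsonF f ∧
      (∀ t, t ∉ Set.Ioo a b → t ∉ Set.Ioo c d → f t = t) ∧
      (∀ t ∈ Set.Ioo a b, if e1 then t < f t else f t < t) ∧
      (∀ t ∈ Set.Ioo c d, if e2 then t < f t else f t < t) := by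
  set f : ℝ → ℝ := fun t => bump e2 c d (bump e1 a b t) with hf
  have hmono : StrictMono f := (bump_strictMono e2 c d).comp (bump_strictMono e1 a b)
  have hcont : Continuous f := (bump_continuous e2 c d).comp (bump_continuous e1 a b)
  have hf_ab : ∀ t ∈ Set.Icc a b, f t = bump e1 a b t := by
    intro t ht
    have h1 := bump_mem (e := e1) hab.le ht
    exact bump_id hcd.le (Or.inl (le_trans h1.2 hbc.le))
  have hf_cd : ∀ t ∈ Set.Icc c d, f t = bump e2 c d t := by
    intro t ht
    have h1 : bump e1 a b t = t := bump_id hab.le (Or.inr (le_trans hbc.le ht.1))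
    simp only [hf, h1]
  have hf_id : ∀ t, t ∉ Set.Ioo a b → t ∉ Set.Ioo c d → f t = t := by
    intro t ht1 ht2
    simp only [Set.mem_Ioo, not_and_or, not_lt] at ht1 ht2
    have h1 : bump e1 a b t = t := bump_id hab.le ht1
    have h2 : bump e2 c d t = t := bump_id hcd.le ht2
    simp only [hf, h1, h2]
  have hf0 : f 0 = 0 := hf_id 0 (by simp [Set.mem_Ioo]; intro h; linarith) (by simp [Set.mem_Ioo]; intro h; linarith)
  have hf1 : f 1 = 1 := hf_id 1 (by simp [Set.mem_Ioo]; intro h; linarith) (by simp [Set.mem_Ioo]; intro h; linarith)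
  refine ⟨f, ⟨?_, hmono.strictMonoOn _, hcont.continuousOn, hf0, hf1, ?_⟩, hf_id, ?_, ?_⟩
  · -- BijOn
    refine ⟨fun t ht => ?_, hmono.injective.injOn, ?_⟩
    · constructor
      · rw [← hf0]; exact hmono.monotone ht.1
      · rw [← hf1]; exact hmono.monotone ht.2
    · intro v hv
      have := intermediate_value_Icc (zero_le_one (α := ℝ)) hcont.continuousOn
      rw [hf0, hf1] at this
      exact this hv
  · -- piecewise structure
    refine ⟨11, ![0, a, (3*a+b)/4, (a+b)/2, (a+3*b)/4, b, c, (3*c+d)/4, (c+d)/2, (c+3*d)/4, d, 1],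
      ?_, rfl, rfl, ?_, ?_⟩
    · rw [Fin.strictMono_iff_lt_succ]
      intro i
      fin_cases i
      exacts [show (0:ℝ) < a from h0a,
        show a < (3*a+b)/4 by linarith,
        show (3*a+b)/4 < (a+b)/2 by linarith,
        show (a+b)/2 < (a+3*b)/4 by linarith,
        show (a+3*b)/4 < b by linarith,
        show b < c from hbc,
        show c < (3*c+d)/4 by linarith,
        show (3*c+d)/4 < (c+d)/2 by linarith,
        show (c+d)/2 < (c+3*d)/4 by linarith,
        show (c+3*d)/4 < d by linarith,
        show d < (1:ℝ) from hd1]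
    · intro i
      fin_cases i
      exacts [IsDyadic.zero, da, da.q1 db, da.mid db, da.q3 db, db, dc, dc.q1 dd,
        dc.mid dd, dc.q3 dd, dd, IsDyadic.one]
    · intro i
      have h2n1 : (2:ℝ) ^ (-1 : ℤ) = 1 / 2 := by norm_num
      have h21 : (2:ℝ) ^ (1 : ℤ) = 2 := by norm_num
      have h20 : (2:ℝ) ^ (0 : ℤ) = 1 := by norm_num
      fin_cases i
      · -- [0, a] : identity
        show ∃ k : ℤ, ∃ c' : ℝ, ∀ t ∈ Set.Icc (0:ℝ) a, f t = 2 ^ k * t + c'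
        refine ⟨0, 0, fun t ht => ?_⟩
        rw [hf_id t (by simp [Set.mem_Ioo]; intro h; linarith [ht.2])
          (by simp [Set.mem_Ioo]; intro h; linarith [ht.2]), h20]
        ring
      · -- [a, (3a+b)/4]
        show ∃ k : ℤ, ∃ c' : ℝ, ∀ t ∈ Set.Icc a ((3*a+b)/4), f t = 2 ^ k * t + c'
        cases e1
        · refine ⟨-1, a / 2, fun t ht => ?_⟩
          rw [hf_ab t ⟨ht.1, by linarith [ht.2]⟩,
            bump_false_eval1 hab ⟨ht.1, by linarith [ht.2]⟩, h2n1]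
          ring
        · refine ⟨1, -a, fun t ht => ?_⟩
          rw [hf_ab t ⟨ht.1, by linarith [ht.2]⟩, bump_true_eval1 hab ⟨ht.1, ht.2⟩, h21]
          ring
      · -- [(3a+b)/4, (a+b)/2]
        show ∃ k : ℤ, ∃ c' : ℝ, ∀ t ∈ Set.Icc ((3*a+b)/4) ((a+b)/2), f t = 2 ^ k * t + c'
        cases e1
        · refine ⟨-1, a / 2, fun t ht => ?_⟩
          rw [hf_ab t ⟨by linarith [ht.1], by linarith [ht.2]⟩,
            bump_false_eval1 hab ⟨by linarith [ht.1], ht.2⟩, h2n1]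
          ring
        · refine ⟨0, (b - a) / 4, fun t ht => ?_⟩
          rw [hf_ab t ⟨by linarith [ht.1], by linarith [ht.2]⟩,
            bump_true_eval2 hab ⟨ht.1, ht.2⟩, h20]
          ring
      · -- [(a+b)/2, (a+3b)/4]
        show ∃ k : ℤ, ∃ c' : ℝ, ∀ t ∈ Set.Icc ((a+b)/2) ((a+3*b)/4), f t = 2 ^ k * t + c'
        cases e1
        · refine ⟨0, -((b - a) / 4), fun t ht => ?_⟩
          rw [hf_ab t ⟨by linarith [ht.1], by linarith [ht.2]⟩,
            bump_false_eval2 hab ⟨ht.1, ht.2⟩, h20]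
          ring
        · refine ⟨-1, b / 2, fun t ht => ?_⟩
          rw [hf_ab t ⟨by linarith [ht.1], by linarith [ht.2]⟩,
            bump_true_eval3 hab ⟨ht.1, by linarith [ht.2]⟩, h2n1]
          ring
      · -- [(a+3b)/4, b]
        show ∃ k : ℤ, ∃ c' : ℝ, ∀ t ∈ Set.Icc ((a+3*b)/4) b, f t = 2 ^ k * t + c'
        cases e1
        · refine ⟨1, -b, fun t ht => ?_⟩
          rw [hf_ab t ⟨by linarith [ht.1], ht.2⟩, bump_false_eval3 hab ⟨ht.1, ht.2⟩, h21]
          ring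
        · refine ⟨-1, b / 2, fun t ht => ?_⟩
          rw [hf_ab t ⟨by linarith [ht.1], ht.2⟩,
            bump_true_eval3 hab ⟨by linarith [ht.1], ht.2⟩, h2n1]
          ring
      · -- [b, c] : identity
        show ∃ k : ℤ, ∃ c' : ℝ, ∀ t ∈ Set.Icc b c, f t = 2 ^ k * t + c'
        refine ⟨0, 0, fun t ht => ?_⟩
        rw [hf_id t (by simp [Set.mem_Ioo]; intro h; linarith [ht.1])
          (by simp [Set.mem_Ioo]; intro h; linarith [ht.2]), h20]
        ring
      · -- [c, (3c+d)/4]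
        show ∃ k : ℤ, ∃ c' : ℝ, ∀ t ∈ Set.Icc c ((3*c+d)/4), f t = 2 ^ k * t + c'
        cases e2
        · refine ⟨-1, c / 2, fun t ht => ?_⟩
          rw [hf_cd t ⟨ht.1, by linarith [ht.2]⟩,
            bump_false_eval1 hcd ⟨ht.1, by linarith [ht.2]⟩, h2n1]
          ring
        · refine ⟨1, -c, fun t ht => ?_⟩
          rw [hf_cd t ⟨ht.1, by linarith [ht.2]⟩, bump_true_eval1 hcd ⟨ht.1, ht.2⟩, h21]
          ring
      · -- [(3c+d)/4, (c+d)/2]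
        show ∃ k : ℤ, ∃ c' : ℝ, ∀ t ∈ Set.Icc ((3*c+d)/4) ((c+d)/2), f t = 2 ^ k * t + c'
        cases e2
        · refine ⟨-1, c / 2, fun t ht => ?_⟩
          rw [hf_cd t ⟨by linarith [ht.1], by linarith [ht.2]⟩,
            bump_false_eval1 hcd ⟨by linarith [ht.1], ht.2⟩, h2n1]
          ring
        · refine ⟨0, (d - c) / 4, fun t ht => ?_⟩
          rw [hf_cd t ⟨by linarith [ht.1], by linarith [ht.2]⟩,
            bump_true_eval2 hcd ⟨ht.1, ht.2⟩, h20]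
          ring
      · -- [(c+d)/2, (c+3d)/4]
        show ∃ k : ℤ, ∃ c' : ℝ, ∀ t ∈ Set.Icc ((c+d)/2) ((c+3*d)/4), f t = 2 ^ k * t + c'
        cases e2
        · refine ⟨0, -((d - c) / 4), fun t ht => ?_⟩
          rw [hf_cd t ⟨by linarith [ht.1], by linarith [ht.2]⟩,
            bump_false_eval2 hcd ⟨ht.1, ht.2⟩, h20]
          ring
        · refine ⟨-1, d / 2, fun t ht => ?_⟩
          rw [hf_cd t ⟨by linarith [ht.1], by linarith [ht.2]⟩,
            bump_true_eval3 hcd ⟨ht.1, by linarith [ht.2]⟩, h2n1]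
          ring
      · -- [(c+3d)/4, d]
        show ∃ k : ℤ, ∃ c' : ℝ, ∀ t ∈ Set.Icc ((c+3*d)/4) d, f t = 2 ^ k * t + c'
        cases e2
        · refine ⟨1, -d, fun t ht => ?_⟩
          rw [hf_cd t ⟨by linarith [ht.1], ht.2⟩, bump_false_eval3 hcd ⟨ht.1, ht.2⟩, h21]
          ring
        · refine ⟨-1, d / 2, fun t ht => ?_⟩
          rw [hf_cd t ⟨by linarith [ht.1], ht.2⟩,
            bump_true_eval3 hcd ⟨by linarith [ht.1], ht.2⟩, h2n1]
          ring
      · -- [d, 1] : identity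
        show ∃ k : ℤ, ∃ c' : ℝ, ∀ t ∈ Set.Icc d (1:ℝ), f t = 2 ^ k * t + c'
        refine ⟨0, 0, fun t ht => ?_⟩
        rw [hf_id t (by simp [Set.mem_Ioo]; intro h; linarith [ht.1])
          (by simp [Set.mem_Ioo]; intro h; linarith [ht.1]), h20]
        ring
  · -- moves on (a,b)
    intro t ht
    have := hf_ab t ⟨ht.1.le, ht.2.le⟩
    cases e1
    · simpa [this] using bump_lt hab ht
    · simpa [this] using bump_gt hab ht
  · -- moves on (c,d)
    intro t ht
    have := hf_cd t ⟨ht.1.le, ht.2.le⟩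
    cases e2
    · simpa [this] using bump_lt hcd ht
    · simpa [this] using bump_gt hcd ht

lemma exists_safe_radius (S : Finset ℝ) (x z : ℝ) (hx0 : 0 < x) (hx1 : x < 1)
    (hxS : x ∉ S) (hxz : x ≠ z) :
    ∃ δ > 0, δ ≤ x ∧ δ ≤ 1 - x ∧ δ ≤ |x - z| ∧ ∀ s ∈ S, δ ≤ |x - s| := by
  classical
  set T : Finset ℝ := insert 0 (insert 1 (insert z S)) with hT
  obtain ⟨w, hw, hmin⟩ := T.exists_min_image (fun s => |x - s|) ⟨0, by simp [hT]⟩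
  have hxT : x ∉ T := by
    simp only [hT, Finset.mem_insert]
    push_neg
    exact ⟨by linarith, by linarith, hxz, hxS⟩
  refine ⟨|x - w|, ?_, ?_, ?_, ?_, ?_⟩
  · rw [gt_iff_lt, abs_pos, sub_ne_zero]
    rintro rfl
    exact hxT hw
  · have := hmin 0 (by simp [hT])
    rwa [sub_zero, abs_of_pos hx0] at this
  · have := hmin 1 (by simp [hT])
    rwa [abs_of_neg (by linarith : x - 1 < 0), neg_sub] at this
  · exact hmin z (by simp [hT])
  · intro s hs
    exact hmin s (by simp [hT, hs])

/-- Given a finite `S ⊆ [0,1]` and distinct `x, y ∈ (0,1)` outside `S`,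
there is an element of Thompson's group `F` fixing `S` pointwise, moving `x` up and `y`
down. -/
theorem thompson_move_two_points (S : Finset ℝ) (hS : ↑S ⊆ Set.Icc (0 : ℝ) 1)
    (x y : ℝ) (hx : x ∈ Set.Ioo (0 : ℝ) 1) (hy : y ∈ Set.Ioo (0 : ℝ) 1)
    (hxS : x ∉ S) (hyS : y ∉ S) (hxy : x ≠ y) :
    ∃ f : ℝ → ℝ, InThompsonF f ∧ (∀ s ∈ S, f s = s) ∧ x < f x ∧ f y < y := by
  obtain ⟨hx0, hx1⟩ := hx
  obtain ⟨hy0, hy1⟩ := hy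
  obtain ⟨δ₁, hδ₁0, hδ₁x, hδ₁x1, hδ₁y, hδ₁S⟩ := exists_safe_radius S x y hx0 hx1 hxS hxy
  obtain ⟨δ₂, hδ₂0, hδ₂y, hδ₂y1, hδ₂x, hδ₂S⟩ := exists_safe_radius S y x hy0 hy1 hyS (Ne.symm hxy)
  set δ := min δ₁ δ₂ with hδ
  have hδ0 : 0 < δ := lt_min hδ₁0 hδ₂0
  have hδ1 : δ ≤ δ₁ := min_le_left _ _
  have hδ2 : δ ≤ δ₂ := min_le_right _ _
  obtain ⟨a, hda, ha1, ha2⟩ := dyadic_dense (show x - δ/4 < x by linarith)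
  obtain ⟨b, hdb, hb1, hb2⟩ := dyadic_dense (show x < x + δ/4 by linarith)
  obtain ⟨a', hda', ha'1, ha'2⟩ := dyadic_dense (show y - δ/4 < y by linarith)
  obtain ⟨b', hdb', hb'1, hb'2⟩ := dyadic_dense (show y < y + δ/4 by linarith)
  have h0a : 0 < a := by linarith
  have h0a' : 0 < a' := by linarith
  have hb1' : b < 1 := by linarith
  have hb'1' : b' < 1 := by linarith
  have hSab : ∀ s ∈ S, s ∉ Set.Ioo a b := by
    intro s hs hmem
    have h1 := hδ₁S s hs
    have h2 : |x - s| < δ/4 := by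
      rw [abs_lt]
      constructor <;> [linarith [hmem.2]; linarith [hmem.1]]
    linarith
  have hSab' : ∀ s ∈ S, s ∉ Set.Ioo a' b' := by
    intro s hs hmem
    have h1 := hδ₂S s hs
    have h2 : |y - s| < δ/4 := by
      rw [abs_lt]
      constructor <;> [linarith [hmem.2]; linarith [hmem.1]]
    linarith
  have hab : a < b := ha2.trans hb1
  have hab' : a' < b' := ha'2.trans hb'1
  rcases lt_or_gt_of_ne hxy with hlt | hlt
  · -- x < y : up-bump on (a,b), down-bump on (a',b')
    have hxyabs : δ ≤ y - x := by
      have := hδ₁y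
      rw [abs_of_neg (by linarith : x - y < 0), neg_sub] at this
      linarith
    have hsep : b < a' := by linarith
    obtain ⟨f, hF, hid, hmove1, hmove2⟩ :=
      key true false a b a' b' h0a hab hsep hab' hb'1' hda hdb hda' hdb'
    refine ⟨f, hF, fun s hs => hid s (hSab s hs) (hSab' s hs), ?_, ?_⟩
    · simpa using hmove1 x ⟨ha2, hb1⟩
    · simpa using hmove2 y ⟨ha'2, hb'1⟩
  · -- y < x : down-bump on (a',b'), up-bump on (a,b)
    have hxyabs : δ ≤ x - y := by
      have := hδ₁y
      rw [abs_of_pos (by linarith : (0:ℝ) < x - y)] at this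
      linarith
    have hsep : b' < a := by linarith
    obtain ⟨f, hF, hid, hmove1, hmove2⟩ :=
      key false true a' b' a b h0a' hab' hsep hab hb1' hda' hdb' hda hdb
    refine ⟨f, hF, fun s hs => hid s (hSab' s hs) (hSab s hs), ?_, ?_⟩
    · simpa using hmove2 x ⟨ha2, hb1⟩
    · simpa using hmove1 y ⟨ha'2, hb'1⟩
end

section
/- Let G be a subgroup of the group of order-preserving bijections of a linearly ordered set (Ω, <), and let e : ℕ → Ω be an injection whose image meets the support {ω : g(ω) ≠ ω} of every non-identity g ∈ G. Then P_e = {g ∈ G : g(e(i)) > e(i), where i is least with g(e(i)) ≠ e(i)} is a positive cone of G. -/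
/-- Let `G` be a subgroup of the order-preserving bijections of a linearly
ordered set `Ω`, and `e : ℕ → Ω` an injection whose image meets the support of every
non-identity element of `G`.  Then `P_e = {g : g(e i) > e i at the least i with
g(e i) ≠ e i}` is a positive cone of `G`. -/
theorem first_difference_positive_cone {Ω : Type*} [LinearOrder Ω]
    (G : Subgroup (Equiv.Perm Ω)) (hmono : ∀ g ∈ G, Monotone ⇑g)
    (e : ℕ → Ω) (he : Function.Injective e)
    (hsupp : ∀ g ∈ G, g ≠ 1 → ∃ i, g (e i) ≠ e i) :
    IsPositiveCone
      {g : G | ∃ i, (∀ j, j < i → (g : Equiv.Perm Ω) (e j) = e j) ∧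
        e i < (g : Equiv.Perm Ω) (e i)} := by
  have hsm : ∀ g : G, StrictMono ⇑(g : Equiv.Perm Ω) := fun g =>
    (hmono g g.2).strictMono_of_injective (g : Equiv.Perm Ω).injective
  refine ⟨?_, ?_, ?_⟩
  · rintro a ⟨i, hia, hga⟩ b ⟨j, hjb, hgb⟩
    refine ⟨min i j, ?_, ?_⟩
    · intro k hk
      have hk1 : k < i := lt_of_lt_of_le hk (min_le_left _ _)
      have hk2 : k < j := lt_of_lt_of_le hk (min_le_right _ _)
      simp [hjb k hk2, hia k hk1]
    · rcases lt_trichotomy i j with h | h | h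
      · have : min i j = i := min_eq_left h.le
        rw [this]
        simpa [hjb i h] using hga
      · subst h
        simp only [min_self, Subgroup.coe_mul, Equiv.Perm.coe_mul, Function.comp_apply]
        calc e i < (a : Equiv.Perm Ω) (e i) := hga
          _ < (a : Equiv.Perm Ω) ((b : Equiv.Perm Ω) (e i)) := hsm a hgb
      · have : min i j = j := min_eq_right h.le
        rw [this]
        have : (a : Equiv.Perm Ω) (e j) < (a : Equiv.Perm Ω) ((b : Equiv.Perm Ω) (e j)) :=
          hsm a hgb
        rw [hia j h] at this
        simpa using this
  · ext g
    simp only [Set.mem_union, Set.mem_inv, Set.mem_setOf_eq, Set.mem_compl_iff,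
      Set.mem_singleton_iff]
    constructor
    · rintro (⟨i, _, hgi⟩ | ⟨i, _, hgi⟩) rfl <;> simp at hgi
    · intro hg
      have hne : (g : Equiv.Perm Ω) ≠ 1 := by
        simpa using Subtype.coe_injective.ne hg
      have hex : ∃ i, (g : Equiv.Perm Ω) (e i) ≠ e i := hsupp g g.2 hne
      set i := Nat.find hex with hi
      have hlt : ∀ j, j < i → (g : Equiv.Perm Ω) (e j) = e j := fun j hj =>
        not_not.mp (Nat.find_min hex hj)
      rcases lt_or_gt_of_ne (Nat.find_spec hex) with h | h
      · right
        refine ⟨i, fun j hj => ?_, ?_⟩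
        · have h1 := hlt j hj
          simp only [InvMemClass.coe_inv]
          conv_lhs => rw [← h1]
          simp
        · have : ((g : Equiv.Perm Ω))⁻¹ ((g : Equiv.Perm Ω) (e i)) ≤
              ((g : Equiv.Perm Ω))⁻¹ (e i) := (hsm g⁻¹).monotone (by simpa using h.le)
          simp only [InvMemClass.coe_inv]
          have h2 : ((g : Equiv.Perm Ω))⁻¹ ((g : Equiv.Perm Ω) (e i)) <
              ((g : Equiv.Perm Ω))⁻¹ (e i) := by
            have := hsm g⁻¹
            simp only [InvMemClass.coe_inv] at this
            exact this h
          simpa using h2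
      · left; exact ⟨i, hlt, h⟩
  · rw [Set.disjoint_left]
    rintro g ⟨i, hia, hga⟩ ⟨j, hjb, hgb⟩
    simp only [InvMemClass.coe_inv] at hjb hgb
    rcases lt_trichotomy i j with h | h | h
    · have h1 := hjb i h
      have : (g : Equiv.Perm Ω) (e i) = e i := by
        conv_lhs => rw [← h1]
        simp
      exact absurd this (ne_of_gt hga)
    · subst h
      have h2 : (g : Equiv.Perm Ω) (e i) < (g : Equiv.Perm Ω) (((g : Equiv.Perm Ω))⁻¹ (e i)) := by
        have := hsm g hgb
        simpa using this
      simp only [Equiv.Perm.coe_inv, Equiv.apply_symm_apply] at h2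
      exact absurd h2 (not_lt_of_gt hga)
    · have h1 := hia j h
      have : ((g : Equiv.Perm Ω))⁻¹ (e j) = e j := by
        conv_lhs => rw [← h1]
        simp
      rw [this] at hgb
      exact lt_irrefl _ hgb
end
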